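/- arXiv:1802.03302 — 2 statements merged into one kernel-verified Lean document; each statement's English description precedes it below -/
import Mathlib

section
/- Let U ⊆ ℝⁿ be open and v : U → ℝᵐ be Lebesgue measurable. Then the approximate jump set J_v of v is Lebesgue negligible: Lⁿ(J_v) = 0. -/
open MeasureTheory Metric Filter
open scoped Topology RealInnerProductSpace

/-- Approximate limit of `v` at `x` along the set `E` (vanishing density of superlevel
sets of `‖v - a‖`). -/
def ApproxLimitOn {n m : ℕ} (E : Set (EuclideanSpace ℝ (Fin n)))
    (v : EuclideanSpace ℝ (Fin n) → EuclideanSpace ℝ (Fin m))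
    (x : EuclideanSpace ℝ (Fin n)) (a : EuclideanSpace ℝ (Fin m)) : Prop :=
  ∀ ε > (0:ℝ), Tendsto
    (fun ρ : ℝ => (volume (E ∩ ball x ρ ∩ {y | ε < ‖v y - a‖})).toReal / ρ ^ n)
    (𝓝[>] (0:ℝ)) (𝓝 0)

/-- The approximate jump set of a measurable function `v : U → ℝᵐ`. -/
def ApproxJumpSet {n m : ℕ} (U : Set (EuclideanSpace ℝ (Fin n)))
    (v : EuclideanSpace ℝ (Fin n) → EuclideanSpace ℝ (Fin m)) :
    Set (EuclideanSpace ℝ (Fin n)) :=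
  {x ∈ U | ∃ (a b : EuclideanSpace ℝ (Fin m)) (ν : EuclideanSpace ℝ (Fin n)),
    a ≠ b ∧ ‖ν‖ = 1 ∧
    ApproxLimitOn {y | 0 < ⟪y - x, ν⟫} v x a ∧
    ApproxLimitOn {y | ⟪y - x, ν⟫ < 0} v x b}

section Aux

variable {n m : ℕ}

private lemma kappa_pos (hn : 0 < n) :
    0 < (volume (ball (0 : EuclideanSpace ℝ (Fin n)) 1)).toReal := by
  haveI : Nonempty (Fin n) := Fin.pos_iff_nonempty.mp hn
  exact ENNReal.toReal_pos (measure_ball_pos _ _ one_pos).ne' measure_ball_lt_top.ne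

private lemma vol_ball (hn : 0 < n) (x : EuclideanSpace ℝ (Fin n)) {r : ℝ} (hr : 0 ≤ r) :
    (volume (ball x r)).toReal
      = r ^ n * (volume (ball (0 : EuclideanSpace ℝ (Fin n)) 1)).toReal := by
  haveI : Nonempty (Fin n) := Fin.pos_iff_nonempty.mp hn
  rw [Measure.addHaar_ball volume x hr, ENNReal.toReal_mul, ENNReal.toReal_ofReal (by positivity),
    finrank_euclideanSpace_fin]

private lemma vol_closedBall (hn : 0 < n) (x : EuclideanSpace ℝ (Fin n)) {r : ℝ} (hr : 0 ≤ r) :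
    (volume (closedBall x r)).toReal
      = r ^ n * (volume (ball (0 : EuclideanSpace ℝ (Fin n)) 1)).toReal := by
  haveI : Nonempty (Fin n) := Fin.pos_iff_nonempty.mp hn
  rw [Measure.addHaar_closedBall volume x hr, ENNReal.toReal_mul,
    ENNReal.toReal_ofReal (by positivity), finrank_euclideanSpace_fin]

/-- Almost every point of a measurable set `S` is a point of vanishing (normalized) density
for the complement of `S`. -/
private lemma compl_density (hn : 0 < n) {S : Set (EuclideanSpace ℝ (Fin n))}
    (hS : MeasurableSet S) :
    ∀ᵐ x, x ∈ S → Tendsto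
      (fun ρ : ℝ => (volume (Sᶜ ∩ ball x ρ)).toReal / ρ ^ n) (𝓝[>] (0:ℝ)) (𝓝 0) := by
  filter_upwards [Besicovitch.ae_tendsto_measure_inter_div_of_measurableSet volume hS]
    with x hx hxS
  rw [Set.indicator_of_mem hxS] at hx
  simp only [Pi.one_apply] at hx
  set κ := (volume (ball (0 : EuclideanSpace ℝ (Fin n)) 1)).toReal with hκdef
  have hκ : 0 < κ := kappa_pos hn
  have h1 : Tendsto
      (fun r : ℝ => (volume (S ∩ closedBall x r) / volume (closedBall x r)).toReal)
      (𝓝[>] (0:ℝ)) (𝓝 1) := by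
    have h := (ENNReal.tendsto_toReal ENNReal.one_ne_top).comp hx
    rw [ENNReal.toReal_one] at h
    exact h
  have key : ∀ ρ ∈ Set.Ioi (0:ℝ),
      (volume (Sᶜ ∩ ball x ρ)).toReal / ρ ^ n
        ≤ κ * (1 - (volume (S ∩ closedBall x ρ) / volume (closedBall x ρ)).toReal) := by
    intro ρ hρ
    have hρ' : (0:ℝ) < ρ := hρ
    have hcbfin : volume (closedBall x ρ) ≠ ⊤ := measure_closedBall_lt_top.ne
    have hcbpos : volume (closedBall x ρ) ≠ 0 := by
      refine fun h => absurd (measure_mono_null ball_subset_closedBall h) ?_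
      exact (measure_ball_pos volume x hρ').ne'
    have htr : (volume (S ∩ closedBall x ρ) / volume (closedBall x ρ)).toReal
        = (volume (S ∩ closedBall x ρ)).toReal / (ρ ^ n * κ) := by
      rw [ENNReal.toReal_div, vol_closedBall hn x hρ'.le]
    have hsplit : (volume (S ∩ closedBall x ρ)).toReal
        + (volume (Sᶜ ∩ closedBall x ρ)).toReal = ρ ^ n * κ := by
      have h0 := measure_inter_add_diff (μ := volume) (closedBall x ρ) hS
      have hd : closedBall x ρ \ S = Sᶜ ∩ closedBall x ρ := by
        rw [Set.diff_eq, Set.inter_comm]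
      have hc : closedBall x ρ ∩ S = S ∩ closedBall x ρ := Set.inter_comm _ _
      rw [hd, hc] at h0
      have hf1 : volume (S ∩ closedBall x ρ) ≠ ⊤ :=
        (lt_of_le_of_lt (measure_mono Set.inter_subset_right) measure_closedBall_lt_top).ne
      have hf2 : volume (Sᶜ ∩ closedBall x ρ) ≠ ⊤ :=
        (lt_of_le_of_lt (measure_mono Set.inter_subset_right) measure_closedBall_lt_top).ne
      have := congrArg ENNReal.toReal h0
      rw [ENNReal.toReal_add hf1 hf2, vol_closedBall hn x hρ'.le] at this
      exact this
    have hmono : (volume (Sᶜ ∩ ball x ρ)).toReal ≤ (volume (Sᶜ ∩ closedBall x ρ)).toReal := by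
      apply ENNReal.toReal_mono
      · exact (lt_of_le_of_lt (measure_mono Set.inter_subset_right)
          measure_closedBall_lt_top).ne
      · exact measure_mono (Set.inter_subset_inter_right _ ball_subset_closedBall)
    rw [htr]
    have hρn : (0:ℝ) < ρ ^ n := by positivity
    rw [div_le_iff₀ hρn] at *
    have expand : κ * (1 - (volume (S ∩ closedBall x ρ)).toReal / (ρ ^ n * κ)) * ρ ^ n
        = ρ ^ n * κ - (volume (S ∩ closedBall x ρ)).toReal := by
      field_simp
    rw [expand]
    linarith
  have hlim : Tendsto
      (fun ρ : ℝ => κ * (1 - (volume (S ∩ closedBall x ρ) / volume (closedBall x ρ)).toReal))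
      (𝓝[>] (0:ℝ)) (𝓝 0) := by
    have : Tendsto (fun ρ : ℝ =>
        κ * (1 - (volume (S ∩ closedBall x ρ) / volume (closedBall x ρ)).toReal))
        (𝓝[>] (0:ℝ)) (𝓝 (κ * (1 - 1))) :=
      (tendsto_const_nhds.sub h1).const_mul κ
    simpa using this
  refine squeeze_zero' ?_ ?_ hlim
  · filter_upwards [self_mem_nhdsWithin] with ρ hρ
    have hρ' : (0:ℝ) < ρ := hρ
    positivity
  · filter_upwards [self_mem_nhdsWithin] with ρ hρ using key ρ hρ

/-- Almost every point is a point of approximate continuity of a measurable function,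
with the normalized density used in `ApproxLimitOn`. -/
private lemma ae_approx_cont (hn : 0 < n)
    {v : EuclideanSpace ℝ (Fin n) → EuclideanSpace ℝ (Fin m)} (hv : Measurable v) :
    ∀ᵐ x, ∀ ε > (0:ℝ), Tendsto
      (fun ρ : ℝ => (volume (ball x ρ ∩ {y | ε < ‖v y - v x‖})).toReal / ρ ^ n)
      (𝓝[>] (0:ℝ)) (𝓝 0) := by
  obtain ⟨D, Dcount, Ddense⟩ :=
    TopologicalSpace.exists_countable_dense (EuclideanSpace ℝ (Fin m))
  have main : ∀ᵐ x, ∀ z ∈ D, ∀ q : ℚ, x ∈ v ⁻¹' ball z (q:ℝ) →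
      Tendsto (fun ρ : ℝ => (volume ((v ⁻¹' ball z (q:ℝ))ᶜ ∩ ball x ρ)).toReal / ρ ^ n)
        (𝓝[>] (0:ℝ)) (𝓝 0) := by
    rw [ae_ball_iff Dcount]
    intro z _
    rw [ae_all_iff]
    intro q
    exact compl_density hn (hv measurableSet_ball)
  filter_upwards [main] with x hx ε hε
  obtain ⟨z, hzD, hz⟩ := Ddense.exists_dist_lt (v x) (show (0:ℝ) < ε/3 by linarith)
  obtain ⟨q, hq1, hq2⟩ := exists_rat_btwn (show ε/3 < ε/2 by linarith)
  have hxmem : x ∈ v ⁻¹' ball z (q:ℝ) := by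
    simp only [Set.mem_preimage, mem_ball]
    calc dist (v x) z < ε / 3 := hz
      _ < q := hq1
  have hsub : ∀ ρ : ℝ, ball x ρ ∩ {y | ε < ‖v y - v x‖}
      ⊆ (v ⁻¹' ball z (q:ℝ))ᶜ ∩ ball x ρ := by
    intro ρ y hy
    refine ⟨fun hmem => ?_, hy.1⟩
    rw [Set.mem_preimage, mem_ball] at hmem
    have h1 : dist (v y) (v x) ≤ dist (v y) z + dist z (v x) := dist_triangle _ _ _
    have h2 : ε < dist (v y) (v x) := by
      have := hy.2
      simpa [dist_eq_norm] using this
    have h3 : dist z (v x) < ε / 3 := by rw [dist_comm]; exact hz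
    have h4 : (q:ℝ) < ε / 2 := hq2
    linarith
  refine squeeze_zero' ?_ ?_ (hx z hzD q hxmem)
  · filter_upwards [self_mem_nhdsWithin] with ρ hρ
    have hρ' : (0:ℝ) < ρ := hρ
    positivity
  · filter_upwards [self_mem_nhdsWithin] with ρ hρ
    have hρ' : (0:ℝ) < ρ := hρ
    have hρn : (0:ℝ) < ρ ^ n := by positivity
    have hfin : volume ((v ⁻¹' ball z (q:ℝ))ᶜ ∩ ball x ρ) ≠ ⊤ :=
      (lt_of_le_of_lt (measure_mono Set.inter_subset_right) measure_ball_lt_top).ne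
    exact (div_le_div_iff_of_pos_right hρn).mpr (ENNReal.toReal_mono hfin (measure_mono (hsub ρ)))

private lemma halfball_subset {x ν : EuclideanSpace ℝ (Fin n)} (hν : ‖ν‖ = 1)
    {ρ : ℝ} (hρ : 0 < ρ) :
    ball (x + (ρ/2) • ν) (ρ/4) ⊆ {y | 0 < ⟪y - x, ν⟫} ∩ ball x ρ := by
  intro y hy
  rw [mem_ball, dist_eq_norm] at hy
  have hw : ‖y - x - (ρ/2) • ν‖ < ρ/4 := by
    have h : y - (x + (ρ/2) • ν) = y - x - (ρ/2) • ν := by abel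
    rwa [h] at hy
  have hinner : |⟪y - x - (ρ/2) • ν, ν⟫| ≤ ‖y - x - (ρ/2) • ν‖ := by
    have := abs_real_inner_le_norm (y - x - (ρ/2) • ν) ν
    simpa [hν] using this
  constructor
  · show 0 < ⟪y - x, ν⟫
    have hdecomp : ⟪y - x, ν⟫ = ⟪y - x - (ρ/2) • ν, ν⟫ + (ρ/2) * ⟪ν, ν⟫ := by
      simp only [inner_sub_left, real_inner_smul_left]; ring
    have hνν : ⟪ν, ν⟫ = (1:ℝ) := by
      rw [real_inner_self_eq_norm_mul_norm, hν]; norm_num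
    rw [hdecomp, hνν]
    have hlow : -(ρ/4) ≤ ⟪y - x - (ρ/2) • ν, ν⟫ := by
      have h1 := neg_abs_le ⟪y - x - (ρ/2) • ν, ν⟫
      linarith [hinner, hw]
    linarith
  · rw [mem_ball, dist_eq_norm]
    have hdecomp : y - x = (y - x - (ρ/2) • ν) + (ρ/2) • ν := by abel
    rw [hdecomp]
    have h2 : ‖(ρ/2) • ν‖ = ρ/2 := by
      rw [norm_smul, hν, Real.norm_eq_abs, abs_of_pos (by linarith)]; ring
    calc ‖(y - x - (ρ/2) • ν) + (ρ/2) • ν‖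
        ≤ ‖y - x - (ρ/2) • ν‖ + ‖(ρ/2) • ν‖ := norm_add_le _ _
      _ < ρ := by rw [h2]; linarith

/-- If `v` has approximate limit `a` at `x` along a half-space and `x` is a point of
approximate continuity of `v`, then `a = v x`. -/
private lemma halfspace_limit_eq (hn : 0 < n)
    {v : EuclideanSpace ℝ (Fin n) → EuclideanSpace ℝ (Fin m)}
    {x ν : EuclideanSpace ℝ (Fin n)} {a : EuclideanSpace ℝ (Fin m)}
    (hν : ‖ν‖ = 1)
    (hx : ∀ ε > (0:ℝ), Tendsto
      (fun ρ : ℝ => (volume (ball x ρ ∩ {y | ε < ‖v y - v x‖})).toReal / ρ ^ n)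
      (𝓝[>] (0:ℝ)) (𝓝 0))
    (ha : ApproxLimitOn {y | 0 < ⟪y - x, ν⟫} v x a) : a = v x := by
  by_contra hne
  set ε := ‖a - v x‖ / 3 with hεdef
  have hεpos : 0 < ε := by
    have : a - v x ≠ 0 := sub_ne_zero.mpr hne
    have := norm_pos_iff.mpr this
    rw [hεdef]; linarith
  have h1 := ha ε hεpos
  have h2 := hx ε hεpos
  set κ := (volume (ball (0 : EuclideanSpace ℝ (Fin n)) 1)).toReal with hκdef
  have hκ : 0 < κ := kappa_pos hn
  have key : ∀ ρ ∈ Set.Ioi (0:ℝ), κ / 4 ^ n ≤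
      (volume ({y | 0 < ⟪y - x, ν⟫} ∩ ball x ρ ∩ {y | ε < ‖v y - a‖})).toReal / ρ ^ n
      + (volume (ball x ρ ∩ {y | ε < ‖v y - v x‖})).toReal / ρ ^ n := by
    intro ρ hρ
    have hρ' : (0:ℝ) < ρ := hρ
    set A := {y | 0 < ⟪y - x, ν⟫} ∩ ball x ρ ∩ {y | ε < ‖v y - a‖} with hA
    set B := ball x ρ ∩ {y | ε < ‖v y - v x‖} with hB
    have hsub : ball (x + (ρ/2) • ν) (ρ/4) ⊆ A ∪ B := by
      intro y hy
      have hy' := halfball_subset hν hρ' hy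
      by_cases hcase : ε < ‖v y - a‖
      · exact Or.inl ⟨hy', hcase⟩
      · refine Or.inr ⟨hy'.2, ?_⟩
        push_neg at hcase
        have htri : ‖a - v x‖ ≤ ‖v y - a‖ + ‖v y - v x‖ := by
          have h := norm_sub_le (v y - v x) (v y - a)
          have heq : (v y - v x) - (v y - a) = a - v x := by abel
          rw [heq] at h
          linarith
        show ε < ‖v y - v x‖
        have : ‖a - v x‖ = 3 * ε := by rw [hεdef]; ring
        linarith
    have hAsub : A ⊆ ball x ρ := fun y hy => hy.1.2
    have hAfin : volume A ≠ ⊤ :=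
      (lt_of_le_of_lt (measure_mono hAsub) measure_ball_lt_top).ne
    have hBfin : volume B ≠ ⊤ :=
      (lt_of_le_of_lt (measure_mono Set.inter_subset_left) measure_ball_lt_top).ne
    have hvol : (ρ/4) ^ n * κ ≤ (volume A).toReal + (volume B).toReal := by
      have h0 : volume (ball (x + (ρ/2) • ν) (ρ/4)) ≤ volume A + volume B :=
        le_trans (measure_mono hsub) (measure_union_le A B)
      have h1' : (volume (ball (x + (ρ/2) • ν) (ρ/4))).toReal = (ρ/4) ^ n * κ :=
        vol_ball hn _ (by linarith)
      have h2' : (volume A + volume B).toReal = (volume A).toReal + (volume B).toReal :=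
        ENNReal.toReal_add hAfin hBfin
      calc (ρ/4) ^ n * κ = (volume (ball (x + (ρ/2) • ν) (ρ/4))).toReal := h1'.symm
        _ ≤ (volume A + volume B).toReal :=
            ENNReal.toReal_mono (by rw [ENNReal.add_ne_top]; exact ⟨hAfin, hBfin⟩) h0
        _ = _ := h2'
    have hρn : (0:ℝ) < ρ ^ n := by positivity
    rw [← add_div, le_div_iff₀ hρn]
    have hpow : (ρ/4) ^ n = ρ ^ n / 4 ^ n := div_pow ρ 4 n
    calc κ / 4 ^ n * ρ ^ n = (ρ/4) ^ n * κ := by rw [hpow]; ring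
      _ ≤ _ := hvol
  have hle : κ / 4 ^ n ≤ 0 := by
    refine ge_of_tendsto (by simpa using h1.add h2) ?_
    filter_upwards [self_mem_nhdsWithin] with ρ hρ using key ρ hρ
  have : (0:ℝ) < κ / 4 ^ n := by positivity
  linarith

end Aux

/-- **The approximate jump set of a measurable function is Lebesgue negligible.** -/
theorem stmt1 {n m : ℕ} (U : Set (EuclideanSpace ℝ (Fin n))) (hU : IsOpen U)
    (v : EuclideanSpace ℝ (Fin n) → EuclideanSpace ℝ (Fin m)) (hv : Measurable v) :
    volume (ApproxJumpSet U v) = 0 := by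
  rcases Nat.eq_zero_or_pos n with hn | hn
  · subst hn
    have hempty : ApproxJumpSet U v = ∅ := by
      ext x
      simp only [ApproxJumpSet, Set.mem_setOf_eq, Set.mem_empty_iff_false, iff_false, not_and]
      rintro _ ⟨a, b, ν, hab, hν, -, -⟩
      have hν0 : ν = 0 := Subsingleton.elim _ _
      rw [hν0, norm_zero] at hν
      exact one_ne_zero hν.symm
    rw [hempty, measure_empty]
  · have hae := ae_approx_cont hn hv
    refine measure_mono_null (fun x hx => ?_) (ae_iff.mp hae)
    obtain ⟨hxU, a, b, ν, hab, hν, ha, hb⟩ := hx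
    simp only [Set.mem_setOf_eq]
    intro hP
    have ha' : a = v x := halfspace_limit_eq hn hν hP ha
    have hb' : b = v x := by
      have hset : {y | ⟪y - x, ν⟫ < 0} = {y | 0 < ⟪y - x, -ν⟫} := by
        ext y
        simp only [Set.mem_setOf_eq, inner_neg_right]
        exact (neg_pos (a := ⟪y - x, ν⟫)).symm
      refine halfspace_limit_eq hn (ν := -ν) (by rw [norm_neg]; exact hν) hP ?_
      rw [← hset]
      exact hb
    exact hab (ha'.trans hb'.symm)
end

section
/- Let (a_h)_h be a sequence of affine functions a_h : ℝⁿ → ℝ such that (a_h)_h is unbounded (in any norm on the finite-dimensional space of affine functions). Then there exists a subsequence (a_{h_k})_k satisfying one of the following: either a_{h_k}(x) → +∞ for every x ∈ ℝⁿ, or a_{h_k}(x) → −∞ for every x ∈ ℝⁿ, or there exist ν ∈ ℝⁿ \ {0} and t ∈ ℝ such that a_{h_k}(x) → +∞ for every x with x·ν > t and a_{h_k}(x) → −∞ for every x with x·ν < t. -/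
open Filter
open scoped Topology RealInnerProductSpace

/-- **Trichotomy for unbounded sequences of affine functions.** If a sequence of affine
functions `x ↦ ⟪c h, x⟫ + d h` on `ℝⁿ` is unbounded (in the finite-dimensional space of
affine functions), then some subsequence diverges to `+∞` everywhere, or to `-∞`
everywhere, or to `+∞` on one side of a hyperplane `{x ⬝ ν = t}` and to `-∞` on the
other side. -/
theorem stmt2 {n : ℕ}
    (c : ℕ → EuclideanSpace ℝ (Fin n)) (d : ℕ → ℝ)
    (hunb : ¬ ∃ R : ℝ, ∀ h : ℕ, ‖c h‖ + |d h| ≤ R) :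
    ∃ φ : ℕ → ℕ, StrictMono φ ∧
      ((∀ x : EuclideanSpace ℝ (Fin n),
          Tendsto (fun k => ⟪c (φ k), x⟫ + d (φ k)) atTop atTop) ∨
       (∀ x : EuclideanSpace ℝ (Fin n),
          Tendsto (fun k => ⟪c (φ k), x⟫ + d (φ k)) atTop atBot) ∨
       (∃ (ν : EuclideanSpace ℝ (Fin n)) (t : ℝ), ν ≠ 0 ∧
          (∀ x : EuclideanSpace ℝ (Fin n), t < ⟪x, ν⟫ →
            Tendsto (fun k => ⟪c (φ k), x⟫ + d (φ k)) atTop atTop) ∧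
          (∀ x : EuclideanSpace ℝ (Fin n), ⟪x, ν⟫ < t →
            Tendsto (fun k => ⟪c (φ k), x⟫ + d (φ k)) atTop atBot))) := by
  push_neg at hunb
  set f : ℕ → ℝ := fun h => ‖c h‖ + |d h| with hf
  -- frequently large
  have hfreq : ∀ R : ℝ, ∃ᶠ h in atTop, R < f h := by
    intro R
    rw [Filter.frequently_atTop]
    intro N
    obtain ⟨B, hB⟩ : BddAbove (f '' Set.Iio N) :=
      (Set.finite_Iio N).image f |>.bddAbove
    obtain ⟨h, hh⟩ := hunb (max R B)
    refine ⟨h, ?_, lt_of_le_of_lt (le_max_left _ _) hh⟩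
    by_contra hc
    push_neg at hc
    exact absurd (hB ⟨h, hc, rfl⟩) (not_le.2 (lt_of_le_of_lt (le_max_right R B) hh))
  obtain ⟨ψ, hψ, hψval⟩ := extraction_forall_of_frequently (P := fun k h => (k : ℝ) < f h)
    (fun k => hfreq k)
  have hfpos : ∀ k, 0 < f (ψ k) := fun k =>
    lt_of_le_of_lt (Nat.cast_nonneg k) (hψval k)
  have hftop : Tendsto (fun k => f (ψ k)) atTop atTop :=
    tendsto_atTop_mono (fun k => (hψval k).le) tendsto_natCast_atTop_atTop
  -- normalized sequence in product space
  set u : ℕ → (EuclideanSpace ℝ (Fin n)) × ℝ :=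
    fun k => ((f (ψ k))⁻¹ • c (ψ k), (f (ψ k))⁻¹ * d (ψ k)) with hu
  have hub : ∀ k, u k ∈ Metric.closedBall (0 : (EuclideanSpace ℝ (Fin n)) × ℝ) 1 := by
    intro k
    rw [Metric.mem_closedBall, dist_zero_right, Prod.norm_def]
    have hr := (hfpos k)
    apply sup_le <;> simp only [hu, norm_smul, norm_inv, Real.norm_eq_abs, abs_of_pos hr,
      Real.norm_eq_abs]
    · rw [inv_mul_le_iff₀ hr, mul_one]
      exact le_add_of_nonneg_right (abs_nonneg _)
    · rw [abs_mul, abs_of_pos (inv_pos.2 hr), inv_mul_le_iff₀ hr, mul_one]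
      exact le_add_of_nonneg_left (norm_nonneg _)
  obtain ⟨a, -, φ', hφ', hconv⟩ :=
    tendsto_subseq_of_bounded (Metric.isBounded_closedBall
      (x := (0 : (EuclideanSpace ℝ (Fin n)) × ℝ)) (r := 1)) hub
  set ν := a.1
  set δ := a.2
  have h1 : Tendsto (fun k => (f (ψ (φ' k)))⁻¹ • c (ψ (φ' k))) atTop (𝓝 ν) :=
    (continuous_fst.tendsto a).comp hconv
  have h2 : Tendsto (fun k => (f (ψ (φ' k)))⁻¹ * d (ψ (φ' k))) atTop (𝓝 δ) :=
    (continuous_snd.tendsto a).comp hconv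
  -- norm of limit is 1
  have hnorm1 : ‖ν‖ + |δ| = 1 := by
    have h3 : Tendsto (fun k => ‖(f (ψ (φ' k)))⁻¹ • c (ψ (φ' k))‖ +
        |(f (ψ (φ' k)))⁻¹ * d (ψ (φ' k))|) atTop (𝓝 (‖ν‖ + |δ|)) :=
      (h1.norm.add h2.abs)
    have heq : ∀ k, ‖(f (ψ (φ' k)))⁻¹ • c (ψ (φ' k))‖ +
        |(f (ψ (φ' k)))⁻¹ * d (ψ (φ' k))| = 1 := by
      intro k
      have hr := hfpos (φ' k)
      rw [norm_smul, norm_inv, Real.norm_eq_abs, abs_of_pos hr, abs_mul,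
        abs_of_pos (inv_pos.2 hr), ← mul_add, inv_mul_cancel₀ hr.ne']
    rw [funext heq] at h3
    exact tendsto_nhds_unique h3 tendsto_const_nhds
  set Φ : ℕ → ℕ := ψ ∘ φ' with hΦ
  have hΦmono : StrictMono Φ := hψ.comp hφ'
  have hΦtop : Tendsto (fun k => f (Φ k)) atTop atTop := hftop.comp hφ'.tendsto_atTop
  -- key factorization
  have hfact : ∀ x : EuclideanSpace ℝ (Fin n), ∀ k,
      ⟪c (Φ k), x⟫ + d (Φ k) =
      f (Φ k) * (⟪(f (Φ k))⁻¹ • c (Φ k), x⟫ + (f (Φ k))⁻¹ * d (Φ k)) := by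
    intro x k
    have hr : f (Φ k) ≠ 0 := (hfpos (φ' k)).ne'
    rw [real_inner_smul_left, mul_add, ← mul_assoc, ← mul_assoc, mul_inv_cancel₀ hr,
      one_mul, one_mul]
  have hlim : ∀ x : EuclideanSpace ℝ (Fin n),
      Tendsto (fun k => ⟪(f (Φ k))⁻¹ • c (Φ k), x⟫ + (f (Φ k))⁻¹ * d (Φ k))
        atTop (𝓝 (⟪ν, x⟫ + δ)) := by
    intro x
    exact (h1.inner tendsto_const_nhds).add h2
  have hTop : ∀ x : EuclideanSpace ℝ (Fin n), 0 < ⟪ν, x⟫ + δ →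
      Tendsto (fun k => ⟪c (Φ k), x⟫ + d (Φ k)) atTop atTop := by
    intro x hx
    have := Filter.Tendsto.atTop_mul_pos hx hΦtop (hlim x)
    simpa only [← hfact x] using this
  have hBot : ∀ x : EuclideanSpace ℝ (Fin n), ⟪ν, x⟫ + δ < 0 →
      Tendsto (fun k => ⟪c (Φ k), x⟫ + d (Φ k)) atTop atBot := by
    intro x hx
    have := hΦtop.atTop_mul_neg hx (hlim x)
    simpa only [← hfact x] using this
  refine ⟨Φ, hΦmono, ?_⟩
  by_cases hν : ν = 0
  · rw [hν, norm_zero, zero_add] at hnorm1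
    rcases abs_eq (by norm_num : (0:ℝ) ≤ 1) |>.1 hnorm1 with hδ | hδ
    · left
      intro x
      apply hTop
      rw [hν, inner_zero_left, zero_add, hδ]; norm_num
    · right; left
      intro x
      apply hBot
      rw [hν, inner_zero_left, zero_add, hδ]; norm_num
  · right; right
    refine ⟨ν, -δ, hν, ?_, ?_⟩
    · intro x hx
      apply hTop
      rw [real_inner_comm]
      linarith
    · intro x hx
      apply hBot
      rw [real_inner_comm]
      linarith
end
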